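/- Let t ≥ 2, r ≥ 0 and n ≥ t + 2r be integers, let 1 ≤ i < j ≤ n, and let A, B ⊆ 2^[n] be cross t-intersecting families. If s_{ij}(A) = s_{ij}(B) = F_r^t, then A = B and A is isomorphic to F_r^t. -/

import Mathlib

open Finset

open scoped Classical

noncomputable section

/-- The `p`-weight of a family of subsets of `[n] = {1,…,n}`. -/
def mu (n : ℕ) (p : ℝ) (𝓕 : Finset (Finset ℕ)) : ℝ :=
  ∑ F ∈ 𝓕, p ^ F.card * (1 - p) ^ (n - F.card)

/-- Two families are cross `t`-intersecting. -/
def CrossIntersecting (t : ℕ) (𝓐 𝓑 : Finset (Finset ℕ)) : Prop :=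
  ∀ A ∈ 𝓐, ∀ B ∈ 𝓑, t ≤ (A ∩ B).card

/-- The Frankl family `F_i^ℓ = {F ⊆ [n] : |F ∩ [ℓ+2i]| ≥ ℓ+i}`. -/
def FF (n ℓ i : ℕ) : Finset (Finset ℕ) :=
  (Finset.Icc 1 n).powerset.filter fun F => ℓ + i ≤ (F ∩ Finset.Icc 1 (ℓ + 2 * i)).card

/-- `F` reaches level `ℓ`: there is `0 ≤ j ≤ n` with `2|F ∩ [j]| ≥ j + ℓ`. -/
def Reaches (n ℓ : ℕ) (F : Finset ℕ) : Prop :=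
  ∃ j ≤ n, j + ℓ ≤ 2 * (F ∩ Finset.Icc 1 j).card

/-- The number of steps `0 ≤ j ≤ n` at which `F` hits level `ℓ`, i.e. `2|F ∩ [j]| = j + ℓ`. -/
def hitCount (n ℓ : ℕ) (F : Finset ℕ) : ℕ :=
  ((Finset.range (n + 1)).filter fun j => 2 * (F ∩ Finset.Icc 1 j).card = j + ℓ).card

/-- `F^ℓ`: all subsets of `[n]` reaching level `ℓ`. -/
def Fwalk (n ℓ : ℕ) : Finset (Finset ℕ) :=
  (Finset.Icc 1 n).powerset.filter fun F => Reaches n ℓ F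

/-- `tilde F^ℓ`: all subsets of `[n]` reaching level `ℓ+1`. -/
def Ftilde (n ℓ : ℕ) : Finset (Finset ℕ) :=
  (Finset.Icc 1 n).powerset.filter fun F => Reaches n (ℓ + 1) F

/-- `hat F^ℓ`: subsets not reaching level `ℓ+1` and hitting level `ℓ` exactly once. -/
def Fhat (n ℓ : ℕ) : Finset (Finset ℕ) :=
  (Finset.Icc 1 n).powerset.filter fun F => ¬ Reaches n (ℓ + 1) F ∧ hitCount n ℓ F = 1

/-- `ddot F^ℓ`: subsets not reaching level `ℓ+1` and hitting level `ℓ` at least twice. -/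
def Fddot (n ℓ : ℕ) : Finset (Finset ℕ) :=
  (Finset.Icc 1 n).powerset.filter fun F => ¬ Reaches n (ℓ + 1) F ∧ 2 ≤ hitCount n ℓ F

/-- The `(i,j)`-shift of a single set `F`, relative to the family `𝓕`. -/
def shiftSet (i j : ℕ) (𝓕 : Finset (Finset ℕ)) (F : Finset ℕ) : Finset ℕ :=
  if j ∈ F ∧ i ∉ F ∧ insert i (F.erase j) ∉ 𝓕 then insert i (F.erase j) else F

/-- The `(i,j)`-shift `s_{ij}(𝓕)` of a family `𝓕`. -/
def shiftFam (i j : ℕ) (𝓕 : Finset (Finset ℕ)) : Finset (Finset ℕ) :=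
  𝓕.image (shiftSet i j 𝓕)

/-- A family is shifted if all shifts `s_{ij}`, `1 ≤ i < j ≤ n`, fix it. -/
def Shifted (n : ℕ) (𝓕 : Finset (Finset ℕ)) : Prop :=
  ∀ i j : ℕ, 1 ≤ i → i < j → j ≤ n → shiftFam i j 𝓕 = 𝓕

/-- A family of subsets of `[n]` is inclusion maximal. -/
def InclMax (n : ℕ) (𝓕 : Finset (Finset ℕ)) : Prop :=
  ∀ F ∈ 𝓕, ∀ F' : Finset ℕ, F ⊆ F' → F' ⊆ Finset.Icc 1 n → F' ∈ 𝓕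

/-- `λ(𝓕)`: the largest `λ ≥ 0` such that every member of `𝓕` reaches level `λ`. -/
def lam (n : ℕ) (𝓕 : Finset (Finset ℕ)) : ℕ :=
  Nat.findGreatest (fun ℓ => ∀ F ∈ 𝓕, Reaches n ℓ F) n

/-- Two families of subsets of `[n]` are isomorphic via a permutation of `[n]`. -/
def Isom (n : ℕ) (𝓖₁ 𝓖₂ : Finset (Finset ℕ)) : Prop :=
  ∃ σ : Equiv.Perm ℕ, (∀ k ∈ Finset.Icc 1 n, σ k ∈ Finset.Icc 1 n) ∧
    𝓖₁ = 𝓖₂.image fun G => G.image σ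

/-- The quantity `f(ℓ, i, p)` from Ahlswede–Khachatrian type estimates. -/
def fLP (ℓ i : ℕ) (p : ℝ) : ℝ :=
  (p / (1 - p)) ^ (ℓ + 1) +
    (Nat.choose (ℓ + 2 * i) i : ℝ) * ((ℓ + 1 : ℝ) / (ℓ + i + 1)) * p ^ (ℓ + i) *
      (1 - p) ^ i * (1 - p / (1 - p))

/-- The walk `D_s^t(i) = [t−1] ∪ {t+s,…,t+2s} ∪ {t+2s+i+2k : k ≥ 1} ∩ [n]`. -/
def DD (n t s i : ℕ) : Finset ℕ :=
  Finset.Icc 1 (t - 1) ∪ Finset.Icc (t + s) (t + 2 * s) ∪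
    ((Finset.Icc 1 n).filter fun m => ∃ k ∈ Finset.Icc 1 n, m = t + 2 * s + i + 2 * k)

end


namespace S7

/-- The swap `insert j (H.erase i)` (for `i ∈ H`, `j ∉ H`). -/
def tauS (i j : ℕ) (H : Finset ℕ) : Finset ℕ := insert j (H.erase i)

lemma mem_FF {n t r : ℕ} {H : Finset ℕ} :
    H ∈ FF n t r ↔ H ⊆ Finset.Icc 1 n ∧ t + r ≤ (H ∩ Finset.Icc 1 (t + 2 * r)).card := by
  simp [FF, Finset.mem_filter, Finset.mem_powerset]

lemma tau_tau {i j : ℕ} {H : Finset ℕ} (hij : i ≠ j) (hiH : i ∈ H) (hjH : j ∉ H) :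
    insert i ((tauS i j H).erase j) = H := by
  have h1 : j ∉ H.erase i := fun h => hjH (Finset.mem_of_mem_erase h)
  rw [tauS, Finset.erase_insert h1, Finset.insert_erase hiH]

lemma mem_tau {i j : ℕ} (hij : i ≠ j) (H : Finset ℕ) :
    i ∉ tauS i j H ∧ j ∈ tauS i j H := by
  constructor
  · intro h
    rcases Finset.mem_insert.1 h with h | h
    · exact hij h
    · exact (Finset.notMem_erase i H) h
  · exact Finset.mem_insert_self _ _

lemma rho_tau {i j : ℕ} {A : Finset ℕ} (hij : i ≠ j) (hjA : j ∈ A) (hiA : i ∉ A) :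
    tauS i j (insert i (A.erase j)) = A := by
  have h1 : i ∉ A.erase j := fun h => hiA (Finset.mem_of_mem_erase h)
  rw [tauS, Finset.erase_insert h1, Finset.insert_erase hjA]

lemma mem_rho {i j : ℕ} (hij : i ≠ j) (A : Finset ℕ) :
    i ∈ insert i (A.erase j) ∧ j ∉ insert i (A.erase j) := by
  refine ⟨Finset.mem_insert_self _ _, fun h => ?_⟩
  rcases Finset.mem_insert.1 h with h | h
  · exact hij h.symm
  · exact (Finset.notMem_erase j A) h

/-- Structure of the "unshifted" sets: if `H ∈ FF \ 𝓕` and `s_{ij} 𝓕 = FF`,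
then `i ∈ H`, `j ∉ H`, `τH ∈ 𝓕` and `τH ∉ FF`. -/
lemma unshift_mem {n t r i j : ℕ} (hij : i < j) {𝓕 : Finset (Finset ℕ)}
    (hs : shiftFam i j 𝓕 = FF n t r) {H : Finset ℕ}
    (hHF : H ∈ FF n t r) (hH𝓕 : H ∉ 𝓕) :
    i ∈ H ∧ j ∉ H ∧ tauS i j H ∈ 𝓕 ∧ tauS i j H ∉ FF n t r := by
  have hne : i ≠ j := Nat.ne_of_lt hij
  rw [← hs, shiftFam, Finset.mem_image] at hHF
  obtain ⟨A, hA𝓕, hAH⟩ := hHF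
  rw [shiftSet] at hAH
  split_ifs at hAH with hc
  · obtain ⟨hjA, hiA, hni⟩ := hc
    subst hAH
    have hiH := (mem_rho hne A).1
    have hjH := (mem_rho hne A).2
    have htau : tauS i j (insert i (A.erase j)) = A := rho_tau hne hjA hiA
    refine ⟨hiH, hjH, by rw [htau]; exact hA𝓕, ?_⟩
    rw [htau]
    intro hAFF
    rw [← hs, shiftFam, Finset.mem_image] at hAFF
    obtain ⟨A', hA'𝓕, hA'A⟩ := hAFF
    rw [shiftSet] at hA'A
    split_ifs at hA'A with hc'
    · exact hiA (hA'A ▸ Finset.mem_insert_self i _)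
    · subst hA'A
      exact hc' ⟨hjA, hiA, hni⟩
  · subst hAH; exact absurd hA𝓕 hH𝓕

/-- Every member of `𝓕` is in `FF`, or is `τH` for some `H ∈ FF \ 𝓕`. -/
lemma mem_shift_orig {n t r i j : ℕ} (hij : i < j) {𝓕 : Finset (Finset ℕ)}
    (hs : shiftFam i j 𝓕 = FF n t r) {A : Finset ℕ} (hA : A ∈ 𝓕) :
    A ∈ FF n t r ∨ ∃ H, H ∈ FF n t r ∧ H ∉ 𝓕 ∧ A = tauS i j H := by
  have hne : i ≠ j := Nat.ne_of_lt hij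
  have himg : shiftSet i j 𝓕 A ∈ FF n t r := by
    rw [← hs, shiftFam]
    exact Finset.mem_image_of_mem _ hA
  rw [shiftSet] at himg
  split_ifs at himg with hc
  · obtain ⟨hjA, hiA, hni⟩ := hc
    exact Or.inr ⟨insert i (A.erase j), himg, hni, (rho_tau hne hjA hiA).symm⟩
  · exact Or.inl himg

lemma tau_subset {n i j : ℕ} (hi : 1 ≤ i) (hj1 : 1 ≤ j) (hj : j ≤ n) {H : Finset ℕ}
    (hH : H ⊆ Finset.Icc 1 n) : tauS i j H ⊆ Finset.Icc 1 n := by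
  intro z hz
  rcases Finset.mem_insert.1 hz with h | h
  · subst h; exact Finset.mem_Icc.2 ⟨hj1, hj⟩
  · exact hH (Finset.mem_of_mem_erase h)

lemma erase_inter' (a : ℕ) (s u : Finset ℕ) : (s.erase a) ∩ u = (s ∩ u).erase a := by
  ext z
  simp only [Finset.mem_inter, Finset.mem_erase]
  tauto

lemma insert_inter_of_mem' {a : ℕ} {s u : Finset ℕ} (h : a ∈ u) :
    (insert a s) ∩ u = insert a (s ∩ u) := by
  ext z
  simp only [Finset.mem_inter, Finset.mem_insert]
  constructor
  · rintro ⟨h1 | h1, h2⟩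
    · exact Or.inl h1
    · exact Or.inr ⟨h1, h2⟩
  · rintro (rfl | ⟨h1, h2⟩)
    · exact ⟨Or.inl rfl, h⟩
    · exact ⟨Or.inr h1, h2⟩

lemma insert_inter_of_not_mem' {a : ℕ} {s u : Finset ℕ} (h : a ∉ u) :
    (insert a s) ∩ u = s ∩ u := by
  ext z
  simp only [Finset.mem_inter, Finset.mem_insert]
  constructor
  · rintro ⟨h1 | h1, h2⟩
    · subst h1; exact absurd h2 h
    · exact ⟨h1, h2⟩
  · rintro ⟨h1, h2⟩; exact ⟨Or.inr h1, h2⟩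

/-- In the hard case: if `H ∈ FF` but `τH ∉ FF`, then `i ≤ t+2r < j` and
`|H ∩ [t+2r]| = t+r` exactly. -/
lemma hardcase {n t r i j : ℕ} (hi : 1 ≤ i) (hij : i < j) (hj : j ≤ n)
    {H : Finset ℕ} (hHF : H ∈ FF n t r) (hiH : i ∈ H) (hjH : j ∉ H)
    (htau : tauS i j H ∉ FF n t r) :
    i ≤ t + 2 * r ∧ t + 2 * r < j ∧ (H ∩ Finset.Icc 1 (t + 2 * r)).card = t + r := by
  obtain ⟨hHsub, hHcard⟩ := mem_FF.1 hHF
  have hj1 : 1 ≤ j := le_trans hi (le_of_lt hij)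
  have hsub : tauS i j H ⊆ Finset.Icc 1 n := tau_subset hi hj1 hj hHsub
  have hiC : i ∈ Finset.Icc 1 (t + 2 * r) ∨ i ∉ Finset.Icc 1 (t + 2 * r) := em _
  -- first: j > t + 2r
  have hjbig : t + 2 * r < j := by
    by_contra hjle
    push_neg at hjle
    have hjC : j ∈ Finset.Icc 1 (t + 2 * r) := Finset.mem_Icc.2 ⟨hj1, hjle⟩
    have hiC' : i ∈ Finset.Icc 1 (t + 2 * r) :=
      Finset.mem_Icc.2 ⟨hi, le_trans (le_of_lt hij) hjle⟩
    apply htau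
    rw [mem_FF]
    refine ⟨hsub, ?_⟩
    have : tauS i j H ∩ Finset.Icc 1 (t + 2 * r) =
        insert j ((H ∩ Finset.Icc 1 (t + 2 * r)).erase i) := by
      rw [tauS, insert_inter_of_mem' hjC, erase_inter' i H]
    rw [this]
    have hjnm : j ∉ (H ∩ Finset.Icc 1 (t + 2 * r)).erase i := by
      intro h
      exact hjH (Finset.mem_inter.1 (Finset.mem_of_mem_erase h)).1
    rw [Finset.card_insert_of_notMem hjnm,
      Finset.card_erase_of_mem (Finset.mem_inter.2 ⟨hiH, hiC'⟩)]
    omega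
  have hjnC : j ∉ Finset.Icc 1 (t + 2 * r) := by
    intro h; exact absurd (Finset.mem_Icc.1 h).2 (by omega)
  -- second: i ≤ t + 2r
  have hismall : i ≤ t + 2 * r := by
    by_contra hibig
    push_neg at hibig
    have hinC : i ∉ Finset.Icc 1 (t + 2 * r) := by
      intro h; exact absurd (Finset.mem_Icc.1 h).2 (by omega)
    apply htau
    rw [mem_FF]
    refine ⟨hsub, ?_⟩
    have : tauS i j H ∩ Finset.Icc 1 (t + 2 * r) = H ∩ Finset.Icc 1 (t + 2 * r) := by
      rw [tauS, insert_inter_of_not_mem' hjnC, erase_inter' i H,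
        Finset.erase_eq_of_notMem]
      intro h; exact hinC (Finset.mem_inter.1 h).2
    rw [this]; exact hHcard
  refine ⟨hismall, hjbig, ?_⟩
  have hiC' : i ∈ Finset.Icc 1 (t + 2 * r) := Finset.mem_Icc.2 ⟨hi, hismall⟩
  have hkey : tauS i j H ∩ Finset.Icc 1 (t + 2 * r) =
      (H ∩ Finset.Icc 1 (t + 2 * r)).erase i := by
    rw [tauS, insert_inter_of_not_mem' hjnC, erase_inter' i H]
  have hlt : (tauS i j H ∩ Finset.Icc 1 (t + 2 * r)).card < t + r := by
    by_contra hge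
    push_neg at hge
    exact htau (mem_FF.2 ⟨hsub, hge⟩)
  rw [hkey, Finset.card_erase_of_mem (Finset.mem_inter.2 ⟨hiH, hiC'⟩)] at hlt
  omega

/-- `X₀` membership predicate: the "extremal boundary" sets. -/
def VV (n t r i j : ℕ) (G : Finset ℕ) : Prop :=
  G ⊆ Finset.Icc 1 n ∧ i ∈ G ∧ j ∉ G ∧
    (G ∩ Finset.Icc 1 (t + 2 * r)).card = t + r

lemma VV_FF {n t r i j : ℕ} {G : Finset ℕ} (h : VV n t r i j G) : G ∈ FF n t r :=
  mem_FF.2 ⟨h.1, le_of_eq h.2.2.2.symm⟩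

/-- key intersection computation: `|τG ∩ H| = |G ∩ H| - 1`. -/
lemma tau_inter_card {i j : ℕ} {G H : Finset ℕ} (hiG : i ∈ G) (hiH : i ∈ H)
    (hjH : j ∉ H) : (tauS i j G ∩ H).card = (G ∩ H).card - 1 := by
  have : tauS i j G ∩ H = (G ∩ H).erase i := by
    rw [tauS, insert_inter_of_not_mem' hjH, erase_inter' i G]
  rw [this, Finset.card_erase_of_mem (Finset.mem_inter.2 ⟨hiG, hiH⟩)]

/-- The edge relation on `X₀` (with endpoints in `X₀`), at distance two through `w`. -/
def EE (n t r i j : ℕ) (u v : Finset ℕ) : Prop :=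
  VV n t r i j u ∧ VV n t r i j v ∧
    ∃ w, VV n t r i j w ∧ (u ∩ w).card = t ∧ (w ∩ v).card = t

lemma card_C (t r : ℕ) : (Finset.Icc 1 (t + 2 * r)).card = t + 2 * r := by
  rw [Nat.card_Icc]; omega

/-- Common neighbour through the core: for a core `A`, there is `w ∈ X₀` meeting
every `u` with `u ∩ C = A` in exactly `t` elements. -/
lemma core_nbr {n t r i j : ℕ} (ht : 2 ≤ t) (hi : 1 ≤ i) (hic : i ≤ t + 2 * r)
    (hjc : t + 2 * r < j) (hn : t + 2 * r ≤ n) {A : Finset ℕ}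
    (hA : A ⊆ Finset.Icc 1 (t + 2 * r)) (hcard : A.card = t + r) (hiA : i ∈ A) :
    ∃ w, VV n t r i j w ∧
      ∀ u : Finset ℕ, u ∩ Finset.Icc 1 (t + 2 * r) = A → (u ∩ w).card = t := by
  have hAe : (A.erase i).card = t + r - 1 := by
    rw [Finset.card_erase_of_mem hiA, hcard]
  obtain ⟨s', hs'sub, hs'card⟩ := Finset.exists_subset_card_eq (s := A.erase i) (n := t - 1)
    (by omega)
  have his' : i ∉ s' := fun h => (Finset.notMem_erase i A) (hs'sub h)
  set s : Finset ℕ := insert i s' with hs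
  have hscard : s.card = t := by
    rw [hs, Finset.card_insert_of_notMem his', hs'card]; omega
  have hsA : s ⊆ A := Finset.insert_subset hiA (hs'sub.trans (Finset.erase_subset _ _))
  set C : Finset ℕ := Finset.Icc 1 (t + 2 * r) with hC
  set w : Finset ℕ := (C \ A) ∪ s with hw
  have hdisj : Disjoint (C \ A) s := by
    rw [Finset.disjoint_left]
    intro a ha has
    exact (Finset.mem_sdiff.1 ha).2 (hsA has)
  have hwcard : w.card = t + r := by
    rw [hw, Finset.card_union_of_disjoint hdisj, Finset.card_sdiff_of_subset hA, hscard,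
      card_C, hcard]
    omega
  have hwC : w ⊆ C := Finset.union_subset (Finset.sdiff_subset) (hsA.trans hA)
  have hwicc : w ⊆ Finset.Icc 1 n :=
    hwC.trans (Finset.Icc_subset_Icc_right hn)
  have hwi : i ∈ w := Finset.mem_union_right _ (Finset.mem_insert_self _ _)
  have hwj : j ∉ w := by
    intro h
    have := (Finset.mem_Icc.1 (hwC h)).2
    omega
  have hwint : w ∩ C = w := Finset.inter_eq_left.2 hwC
  refine ⟨w, ⟨hwicc, hwi, hwj, by rw [hwint]; exact hwcard⟩, ?_⟩
  intro u hu
  have h1 : u ∩ (C \ A) = ∅ := by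
    rw [Finset.eq_empty_iff_forall_notMem]
    intro z hz
    rcases Finset.mem_inter.1 hz with ⟨hzu, hzCA⟩
    rcases Finset.mem_sdiff.1 hzCA with ⟨hzC, hzA⟩
    exact hzA (hu ▸ Finset.mem_inter.2 ⟨hzu, hzC⟩)
  have h2 : u ∩ s = s := by
    apply Finset.inter_eq_right.2
    intro z hz
    have : z ∈ u ∩ C := hu ▸ hsA hz
    exact (Finset.mem_inter.1 this).1
  rw [Finset.inter_union_distrib_left, h1, h2, Finset.empty_union, hscard]

/-- Single swap: replacing `x ∈ u` (`x ≠ i`) by `y ∈ C \ u` is an `EE`-step. -/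
lemma swap_step {n t r i j : ℕ} (ht : 2 ≤ t) (hi : 1 ≤ i) (hic : i ≤ t + 2 * r)
    (hjc : t + 2 * r < j) (hn : t + 2 * r ≤ n) {u : Finset ℕ}
    (hu : VV n t r i j u) (huC : u ⊆ Finset.Icc 1 (t + 2 * r)) {x y : ℕ}
    (hx : x ∈ u) (hxi : x ≠ i) (hy : y ∈ Finset.Icc 1 (t + 2 * r)) (hyu : y ∉ u) :
    VV n t r i j (insert y (u.erase x)) ∧ EE n t r i j u (insert y (u.erase x)) := by
  set C : Finset ℕ := Finset.Icc 1 (t + 2 * r) with hC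
  have hucard : u.card = t + r := by
    have := hu.2.2.2
    rwa [Finset.inter_eq_left.2 huC] at this
  have hiu : i ∈ u := hu.2.1
  have hix : i ∈ u.erase x := Finset.mem_erase.2 ⟨Ne.symm hxi, hiu⟩
  set u₁ : Finset ℕ := insert y (u.erase x) with hu₁
  have hyux : y ∉ u.erase x := fun h => hyu (Finset.mem_of_mem_erase h)
  have hu₁card : u₁.card = t + r := by
    rw [hu₁, Finset.card_insert_of_notMem hyux, Finset.card_erase_of_mem hx, hucard]
    omega
  have hu₁C : u₁ ⊆ C :=
    Finset.insert_subset hy ((Finset.erase_subset _ _).trans huC)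
  have hVV1 : VV n t r i j u₁ := by
    refine ⟨hu₁C.trans (Finset.Icc_subset_Icc_right hn),
      Finset.mem_insert_of_mem hix, ?_, ?_⟩
    · intro h
      have := (Finset.mem_Icc.1 (hu₁C h)).2
      omega
    · rw [Finset.inter_eq_left.2 hu₁C]; exact hu₁card
  refine ⟨hVV1, hu, hVV1, ?_⟩
  -- build the common neighbour w
  have he2 : ((u.erase x).erase i).card = t + r - 2 := by
    rw [Finset.card_erase_of_mem hix, Finset.card_erase_of_mem hx, hucard]
    omega
  obtain ⟨s'', hs''sub, hs''card⟩ :=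
    Finset.exists_subset_card_eq (s := (u.erase x).erase i) (n := t - 2) (by omega)
  have his'' : i ∉ s'' := fun h => (Finset.notMem_erase i _) (hs''sub h)
  set s : Finset ℕ := insert i s'' with hsdef
  have hscard : s.card = t - 1 := by
    rw [hsdef, Finset.card_insert_of_notMem his'', hs''card]
    omega
  have hs_sub : s ⊆ u.erase x :=
    Finset.insert_subset hix (hs''sub.trans (Finset.erase_subset _ _))
  have hsu : s ⊆ u := hs_sub.trans (Finset.erase_subset _ _)
  have hxs : x ∉ s := fun h => (Finset.notMem_erase x u) (hs_sub h)
  have hys : y ∉ s := fun h => hyu (hsu h)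
  have hr1 : 1 ≤ r := by
    have hss : u ⊂ C := (Finset.ssubset_iff_of_subset huC).2 ⟨y, hy, hyu⟩
    have hlt : u.card < C.card := Finset.card_lt_card hss
    have hCc : C.card = t + 2 * r := by rw [hC]; exact card_C t r
    omega
  set D : Finset ℕ := C \ insert y u with hD
  have hyuC : insert y u ⊆ C := Finset.insert_subset hy huC
  have hDcard : D.card = r - 1 := by
    rw [hD, Finset.card_sdiff_of_subset hyuC, Finset.card_insert_of_notMem hyu, hucard, card_C]
    omega
  have hDu : ∀ z ∈ D, z ∉ u := fun z hz h =>
    (Finset.mem_sdiff.1 hz).2 (Finset.mem_insert_of_mem h)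
  have hyD : y ∉ D := fun h => (Finset.mem_sdiff.1 h).2 (Finset.mem_insert_self _ _)
  have hxD : x ∉ D := fun h => hDu x h hx
  have hxy : x ≠ y := fun h => hyu (h ▸ hx)
  have hDs : Disjoint D s := by
    rw [Finset.disjoint_left]
    intro a ha has
    exact hDu a ha (hsu has)
  set w : Finset ℕ := insert x (insert y (D ∪ s)) with hwdef
  have hynDs : y ∉ D ∪ s := by
    rw [Finset.mem_union]; rintro (h | h); exacts [hyD h, hys h]
  have hxn : x ∉ insert y (D ∪ s) := by
    rw [Finset.mem_insert, Finset.mem_union]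
    rintro (h | h | h)
    exacts [hxy h, hxD h, hxs h]
  have hwcard : w.card = t + r := by
    rw [hwdef, Finset.card_insert_of_notMem hxn, Finset.card_insert_of_notMem hynDs,
      Finset.card_union_of_disjoint hDs, hDcard, hscard]
    omega
  have hwC : w ⊆ C := by
    refine Finset.insert_subset (huC hx) (Finset.insert_subset hy ?_)
    exact Finset.union_subset Finset.sdiff_subset (hsu.trans huC)
  have hiw : i ∈ w := by
    refine Finset.mem_insert_of_mem (Finset.mem_insert_of_mem ?_)
    exact Finset.mem_union_right _ (Finset.mem_insert_self _ _)
  have hVVw : VV n t r i j w := by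
    refine ⟨hwC.trans (Finset.Icc_subset_Icc_right hn), hiw, ?_, ?_⟩
    · intro h
      have := (Finset.mem_Icc.1 (hwC h)).2
      omega
    · rw [Finset.inter_eq_left.2 hwC]; exact hwcard
  refine ⟨w, hVVw, ?_, ?_⟩
  · -- u ∩ w = insert x s
    have : u ∩ w = insert x s := by
      ext z
      simp only [Finset.mem_inter, hwdef, Finset.mem_insert, Finset.mem_union]
      constructor
      · rintro ⟨hzu, rfl | rfl | hzD | hzs⟩
        · exact Or.inl rfl
        · exact absurd hzu hyu
        · exact absurd hzu (hDu _ hzD)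
        · exact Or.inr hzs
      · rintro (rfl | hzs)
        · exact ⟨hx, Or.inl rfl⟩
        · exact ⟨hsu hzs, Or.inr (Or.inr (Or.inr hzs))⟩
    rw [this, Finset.card_insert_of_notMem hxs, hscard]
    omega
  · -- w ∩ u₁ = insert y s
    have hsu₁ : s ⊆ u₁ := hs_sub.trans (Finset.subset_insert _ _)
    have hxu₁ : x ∉ u₁ := by
      rw [hu₁, Finset.mem_insert]
      rintro (h | h)
      exacts [hxy h, (Finset.notMem_erase x u) h]
    have hDu₁ : ∀ z ∈ D, z ∉ u₁ := by
      intro z hz h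
      have : z ∈ insert y u := by
        rcases Finset.mem_insert.1 h with h' | h'
        · exact h' ▸ Finset.mem_insert_self _ _
        · exact Finset.mem_insert_of_mem (Finset.mem_of_mem_erase h')
      exact (Finset.mem_sdiff.1 hz).2 this
    have : w ∩ u₁ = insert y s := by
      ext z
      simp only [Finset.mem_inter, hwdef, Finset.mem_insert, Finset.mem_union]
      constructor
      · rintro ⟨rfl | rfl | hzD | hzs, hzu₁⟩
        · exact absurd hzu₁ hxu₁
        · exact Or.inl rfl
        · exact absurd hzu₁ (hDu₁ _ hzD)
        · exact Or.inr hzs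
      · rintro (rfl | hzs)
        · exact ⟨Or.inr (Or.inl rfl), Finset.mem_insert_self _ _⟩
        · exact ⟨Or.inr (Or.inr (Or.inr hzs)), hsu₁ hzs⟩
    rw [this, Finset.card_insert_of_notMem hys, hscard]
    omega

/-- Chain of `EE`-steps between any two core sets. -/
lemma chain {n t r i j : ℕ} (ht : 2 ≤ t) (hi : 1 ≤ i) (hic : i ≤ t + 2 * r)
    (hjc : t + 2 * r < j) (hn : t + 2 * r ≤ n) :
    ∀ (k : ℕ) (u v : Finset ℕ), VV n t r i j u → VV n t r i j v →
      u ⊆ Finset.Icc 1 (t + 2 * r) → v ⊆ Finset.Icc 1 (t + 2 * r) →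
      (u \ v).card = k → Relation.ReflTransGen (EE n t r i j) u v := by
  intro k
  induction k with
  | zero =>
    intro u v hu hv huC hvC hcard
    have hsub : u ⊆ v := by
      rwa [Finset.card_eq_zero, Finset.sdiff_eq_empty_iff_subset] at hcard
    have hucard : u.card = t + r := by
      have := hu.2.2.2; rwa [Finset.inter_eq_left.2 huC] at this
    have hvcard : v.card = t + r := by
      have := hv.2.2.2; rwa [Finset.inter_eq_left.2 hvC] at this
    have : u = v := Finset.eq_of_subset_of_card_le hsub (by omega)
    rw [this]
  | succ k ih =>
    intro u v hu hv huC hvC hcard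
    have hucard : u.card = t + r := by
      have := hu.2.2.2; rwa [Finset.inter_eq_left.2 huC] at this
    have hvcard : v.card = t + r := by
      have := hv.2.2.2; rwa [Finset.inter_eq_left.2 hvC] at this
    have hvu : (v \ u).card = k + 1 := by
      rw [← hcard]; exact (Finset.card_sdiff_comm (by omega)).symm
    obtain ⟨x, hxmem⟩ := Finset.card_pos.1 (by omega : 0 < (u \ v).card)
    obtain ⟨y, hymem⟩ := Finset.card_pos.1 (by omega : 0 < (v \ u).card)
    rcases Finset.mem_sdiff.1 hxmem with ⟨hxu, hxv⟩
    rcases Finset.mem_sdiff.1 hymem with ⟨hyv, hyu⟩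
    have hxi : x ≠ i := fun h => hxv (h ▸ hv.2.1)
    obtain ⟨hVV1, hE⟩ := swap_step ht hi hic hjc hn hu huC hxu hxi (hvC hyv) hyu
    have hu₁C : insert y (u.erase x) ⊆ Finset.Icc 1 (t + 2 * r) :=
      Finset.insert_subset (hvC hyv) ((Finset.erase_subset _ _).trans huC)
    have hstep : (insert y (u.erase x) \ v).card = k := by
      have heq : insert y (u.erase x) \ v = (u \ v).erase x := by
        ext z
        simp only [Finset.mem_sdiff, Finset.mem_insert, Finset.mem_erase]
        constructor
        · rintro ⟨rfl | ⟨hzx, hzu⟩, hzv⟩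
          · exact absurd hyv hzv
          · exact ⟨hzx, hzu, hzv⟩
        · rintro ⟨hzx, hzu, hzv⟩
          exact ⟨Or.inr ⟨hzx, hzu⟩, hzv⟩
      rw [heq, Finset.card_erase_of_mem hxmem, hcard]
      omega
    exact Relation.ReflTransGen.head hE (ih _ v hVV1 hv hu₁C hvC hstep)

/-- Any two members of `X₀` are connected by `EE`-steps. -/
lemma connect {n t r i j : ℕ} (ht : 2 ≤ t) (hi : 1 ≤ i) (hic : i ≤ t + 2 * r)
    (hjc : t + 2 * r < j) (hn : t + 2 * r ≤ n) {u v : Finset ℕ}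
    (hu : VV n t r i j u) (hv : VV n t r i j v) :
    Relation.ReflTransGen (EE n t r i j) u v := by
  set C : Finset ℕ := Finset.Icc 1 (t + 2 * r) with hC
  have hiC : i ∈ C := Finset.mem_Icc.2 ⟨hi, hic⟩
  have hCn : C ⊆ Finset.Icc 1 n := Finset.Icc_subset_Icc_right hn
  have hjC : j ∉ C := fun h => by
    have := (Finset.mem_Icc.1 h).2; omega
  have hcore : ∀ z : Finset ℕ, VV n t r i j z → VV n t r i j (z ∩ C) ∧
      EE n t r i j z (z ∩ C) := by
    intro z hz
    have hzCsub : z ∩ C ⊆ C := Finset.inter_subset_right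
    have hzi : i ∈ z ∩ C := Finset.mem_inter.2 ⟨hz.2.1, hiC⟩
    have hinter : (z ∩ C) ∩ C = z ∩ C := by
      rw [Finset.inter_assoc, Finset.inter_self]
    have hVVz : VV n t r i j (z ∩ C) :=
      ⟨hzCsub.trans hCn, hzi, fun h => hjC (Finset.mem_inter.1 h).2,
        by rw [hinter]; exact hz.2.2.2⟩
    obtain ⟨w, hVVw, hw⟩ := core_nbr ht hi hic hjc hn
      (Finset.inter_subset_right : z ∩ C ⊆ C) hz.2.2.2 hzi
    exact ⟨hVVz, hz, hVVz, w, hVVw, hw z rfl, by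
      rw [Finset.inter_comm]; exact hw (z ∩ C) hinter⟩
  obtain ⟨hVVu', hEu⟩ := hcore u hu
  obtain ⟨hVVv', hEv⟩ := hcore v hv
  have hEv' : EE n t r i j (v ∩ C) v := by
    obtain ⟨h1, h2, w, h3, h4, h5⟩ := hEv
    exact ⟨h2, h1, w, h3, by rw [Finset.inter_comm]; exact h5,
      by rw [Finset.inter_comm]; exact h4⟩
  refine (Relation.ReflTransGen.single hEu).trans
    ((chain ht hi hic hjc hn ((u ∩ C) \ (v ∩ C)).card (u ∩ C) (v ∩ C) hVVu' hVVv'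
      Finset.inter_subset_right Finset.inter_subset_right rfl).trans
      (Relation.ReflTransGen.single hEv'))

/-- Every member of `X₀` has a neighbour in `X₀`. -/
lemma nbr {n t r i j : ℕ} (ht : 2 ≤ t) (hi : 1 ≤ i) (hic : i ≤ t + 2 * r)
    (hjc : t + 2 * r < j) (hn : t + 2 * r ≤ n) {u : Finset ℕ}
    (hu : VV n t r i j u) :
    ∃ w, VV n t r i j w ∧ (u ∩ w).card = t := by
  have hzi : i ∈ u ∩ Finset.Icc 1 (t + 2 * r) :=
    Finset.mem_inter.2 ⟨hu.2.1, Finset.mem_Icc.2 ⟨hi, hic⟩⟩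
  obtain ⟨w, hVVw, hw⟩ := core_nbr ht hi hic hjc hn
    (Finset.inter_subset_right : u ∩ Finset.Icc 1 (t + 2 * r) ⊆ _) hu.2.2.2 hzi
  exact ⟨w, hVVw, hw u rfl⟩

lemma mem_image_swap {i j z : ℕ} {K : Finset ℕ} :
    z ∈ K.image (Equiv.swap i j) ↔ Equiv.swap i j z ∈ K := by
  rw [Finset.mem_image]
  constructor
  · rintro ⟨a, ha, rfl⟩
    rwa [Equiv.swap_apply_self]
  · intro h
    exact ⟨Equiv.swap i j z, h, Equiv.swap_apply_self i j z⟩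

lemma image_swap_tau {i j : ℕ} (hij : i ≠ j) {K : Finset ℕ} (hiK : i ∈ K)
    (hjK : j ∉ K) : K.image (Equiv.swap i j) = tauS i j K := by
  ext z
  rw [mem_image_swap, tauS]
  rcases eq_or_ne z i with rfl | hzi
  · rw [Equiv.swap_apply_left]
    simp only [Finset.mem_insert, Finset.mem_erase]
    constructor
    · intro h; exact absurd h hjK
    · rintro (h | ⟨h1, h2⟩); exacts [absurd h hij, absurd rfl h1]
  rcases eq_or_ne z j with rfl | hzj
  · rw [Equiv.swap_apply_right]
    simp only [Finset.mem_insert, Finset.mem_erase]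
    exact ⟨fun _ => Or.inl trivial, fun _ => hiK⟩
  · rw [Equiv.swap_apply_of_ne_of_ne hzi hzj]
    simp only [Finset.mem_insert, Finset.mem_erase]
    constructor
    · intro h; exact Or.inr ⟨hzi, h⟩
    · rintro (h | ⟨h1, h2⟩); exacts [absurd h hzj, h2]

lemma image_swap_id {i j : ℕ} {K : Finset ℕ} (h : i ∈ K ↔ j ∈ K) :
    K.image (Equiv.swap i j) = K := by
  ext z
  rw [mem_image_swap]
  rcases eq_or_ne z i with rfl | hzi
  · rw [Equiv.swap_apply_left]; exact ⟨fun hj => h.2 hj, fun hi' => h.1 hi'⟩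
  rcases eq_or_ne z j with rfl | hzj
  · rw [Equiv.swap_apply_right]; exact ⟨fun hi' => h.1 hi', fun hj => h.2 hj⟩
  · rw [Equiv.swap_apply_of_ne_of_ne hzi hzj]

lemma mem_image_swap_fam {i j : ℕ} {F : Finset (Finset ℕ)} {K : Finset ℕ} :
    K ∈ F.image (fun G => G.image (Equiv.swap i j)) ↔
      K.image (Equiv.swap i j) ∈ F := by
  have hinv : ∀ L : Finset ℕ,
      (L.image (Equiv.swap i j)).image (Equiv.swap i j) = L := by
    intro L
    rw [Finset.image_image]
    have hcomp : (Equiv.swap i j : ℕ → ℕ) ∘ (Equiv.swap i j) = id := by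
      funext z
      simp only [Function.comp_apply, Equiv.swap_apply_self, id_eq]
    rw [hcomp, Finset.image_id]
  rw [Finset.mem_image]
  constructor
  · rintro ⟨G, hG, rfl⟩; rwa [hinv]
  · intro h; exact ⟨_, h, hinv K⟩

end S7

/-- if both shifts equal `F_r^t` then the families coincide
and are isomorphic to `F_r^t`. -/
theorem statement_7 (n t r i j : ℕ) (ht : 2 ≤ t) (hn : t + 2 * r ≤ n)
    (hi : 1 ≤ i) (hij : i < j) (hj : j ≤ n)
    (𝓐 𝓑 : Finset (Finset ℕ))
    (hA : 𝓐 ⊆ (Finset.Icc 1 n).powerset) (hB : 𝓑 ⊆ (Finset.Icc 1 n).powerset)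
    (hcross : CrossIntersecting t 𝓐 𝓑)
    (hsA : shiftFam i j 𝓐 = FF n t r) (hsB : shiftFam i j 𝓑 = FF n t r) :
    𝓐 = 𝓑 ∧ Isom n 𝓐 (FF n t r) := by
  classical
  have hne : i ≠ j := Nat.ne_of_lt hij
  have hj1 : 1 ≤ j := le_trans hi (le_of_lt hij)
  have hiIcc : i ∈ Finset.Icc 1 n := Finset.mem_Icc.2 ⟨hi, le_trans (le_of_lt hij) hj⟩
  have hjIcc : j ∈ Finset.Icc 1 n := Finset.mem_Icc.2 ⟨hj1, hj⟩
  have hXstruct : ∀ H, H ∈ FF n t r → H ∉ 𝓐 →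
      i ∈ H ∧ j ∉ H ∧ S7.tauS i j H ∈ 𝓐 ∧ S7.tauS i j H ∉ FF n t r :=
    fun H h1 h2 => S7.unshift_mem hij hsA h1 h2
  have hYstruct : ∀ H, H ∈ FF n t r → H ∉ 𝓑 →
      i ∈ H ∧ j ∉ H ∧ S7.tauS i j H ∈ 𝓑 ∧ S7.tauS i j H ∉ FF n t r :=
    fun H h1 h2 => S7.unshift_mem hij hsB h1 h2
  by_cases hmix : (∀ H ∈ FF n t r, H ∈ 𝓐) ∧ (∀ H ∈ FF n t r, H ∈ 𝓑)
  · -- easy case : 𝓐 = 𝓑 = FF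
    have hAF : 𝓐 = FF n t r := by
      apply Finset.Subset.antisymm
      · intro A hA'
        rcases S7.mem_shift_orig hij hsA hA' with h | ⟨H, hHF, hH, _⟩
        · exact h
        · exact absurd (hmix.1 H hHF) hH
      · exact fun H hH => hmix.1 H hH
    have hBF : 𝓑 = FF n t r := by
      apply Finset.Subset.antisymm
      · intro A hA'
        rcases S7.mem_shift_orig hij hsB hA' with h | ⟨H, hHF, hH, _⟩
        · exact h
        · exact absurd (hmix.2 H hHF) hH
      · exact fun H hH => hmix.2 H hH
    refine ⟨hAF.trans hBF.symm, Equiv.refl ℕ, fun k hk => hk, ?_⟩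
    simp only [Equiv.coe_refl, Finset.image_id, Finset.image_id']
    exact hAF
  · -- hard case
    rw [not_and_or] at hmix
    push_neg at hmix
    -- cross-intersection exclusion rules
    have rule1 : ∀ G H, G ∈ FF n t r → G ∉ 𝓐 → S7.VV n t r i j H →
        (G ∩ H).card = t → H ∈ FF n t r ∧ H ∉ 𝓑 := by
      intro G H h1 h2 hVH hGH
      obtain ⟨hiG, hjG, htauA, _⟩ := hXstruct G h1 h2
      have hc : (S7.tauS i j G ∩ H).card = t - 1 := by
        rw [S7.tau_inter_card hiG hVH.2.1 hVH.2.2.1, hGH]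
      refine ⟨S7.VV_FF hVH, fun hB => ?_⟩
      have := hcross _ htauA _ hB
      omega
    have rule2 : ∀ H G, H ∈ FF n t r → H ∉ 𝓑 → S7.VV n t r i j G →
        (G ∩ H).card = t → G ∈ FF n t r ∧ G ∉ 𝓐 := by
      intro H G h1 h2 hVG hGH
      obtain ⟨hiH, hjH, htauB, _⟩ := hYstruct H h1 h2
      have hc : (S7.tauS i j H ∩ G).card = t - 1 := by
        rw [S7.tau_inter_card hiH hVG.2.1 hVG.2.2.1, Finset.inter_comm H G, hGH]
      refine ⟨S7.VV_FF hVG, fun hA' => ?_⟩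
      have := hcross _ hA' _ htauB
      rw [Finset.inter_comm] at this
      omega
    -- get the hard-case parameters and a starting point in X
    obtain ⟨hic, hjc, G₀, hG₀F, hG₀A⟩ :
        i ≤ t + 2 * r ∧ t + 2 * r < j ∧ ∃ G₀, G₀ ∈ FF n t r ∧ G₀ ∉ 𝓐 := by
      rcases hmix with ⟨H, h1, h2⟩ | ⟨H, h1, h2⟩
      · obtain ⟨a, b, _, d⟩ := hXstruct H h1 h2
        obtain ⟨e, f, _⟩ := S7.hardcase hi hij hj h1 a b d
        exact ⟨e, f, H, h1, h2⟩
      · obtain ⟨a, b, _, d⟩ := hYstruct H h1 h2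
        obtain ⟨e, f, g⟩ := S7.hardcase hi hij hj h1 a b d
        have hVH : S7.VV n t r i j H := ⟨(S7.mem_FF.1 h1).1, a, b, g⟩
        obtain ⟨w, hw1, hw2⟩ := S7.nbr ht hi e f hn hVH
        have hres := rule2 H w h1 h2 hw1 (by rw [Finset.inter_comm]; exact hw2)
        exact ⟨e, f, w, hres.1, hres.2⟩
    have hVV_of_A : ∀ K, K ∈ FF n t r → K ∉ 𝓐 → S7.VV n t r i j K := by
      intro K h1 h2
      obtain ⟨a, b, _, d⟩ := hXstruct K h1 h2
      exact ⟨(S7.mem_FF.1 h1).1, a, b, (S7.hardcase hi hij hj h1 a b d).2.2⟩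
    have hVV_of_B : ∀ K, K ∈ FF n t r → K ∉ 𝓑 → S7.VV n t r i j K := by
      intro K h1 h2
      obtain ⟨a, b, _, d⟩ := hYstruct K h1 h2
      exact ⟨(S7.mem_FF.1 h1).1, a, b, (S7.hardcase hi hij hj h1 a b d).2.2⟩
    have hVVG₀ : S7.VV n t r i j G₀ := hVV_of_A G₀ hG₀F hG₀A
    -- propagation along EE-walks
    have propagate : ∀ u v : Finset ℕ, Relation.ReflTransGen (S7.EE n t r i j) u v →
        u ∈ FF n t r ∧ u ∉ 𝓐 → v ∈ FF n t r ∧ v ∉ 𝓐 := by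
      intro u v h hu
      induction h with
      | refl => exact hu
      | tail hab hbc ih =>
        obtain ⟨hVVb, hVVc, w, hVVw, h1, h2⟩ := hbc
        have hw := rule1 _ w ih.1 ih.2 hVVw h1
        exact rule2 w _ hw.1 hw.2 hVVc (by rw [Finset.inter_comm]; exact h2)
    have claimX : ∀ T, S7.VV n t r i j T → T ∉ 𝓐 := fun T hT =>
      (propagate G₀ T (S7.connect ht hi hic hjc hn hVVG₀ hT) ⟨hG₀F, hG₀A⟩).2
    have claimY : ∀ T, S7.VV n t r i j T → T ∉ 𝓑 := by
      intro T hT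
      obtain ⟨w, hw1, hw2⟩ := S7.nbr ht hi hic hjc hn hT
      have hwX := propagate G₀ w (S7.connect ht hi hic hjc hn hVVG₀ hw1) ⟨hG₀F, hG₀A⟩
      exact (rule1 w T hwX.1 hwX.2 hT (by rw [Finset.inter_comm]; exact hw2)).2
    -- characterisation of both families
    have h𝓐 : ∀ K, K ∈ 𝓐 ↔ ((K ∈ FF n t r ∧ ¬ S7.VV n t r i j K) ∨
        ∃ H, S7.VV n t r i j H ∧ K = S7.tauS i j H) := by
      intro K
      constructor
      · intro hK
        rcases S7.mem_shift_orig hij hsA hK with h | ⟨H, h1, h2, h3⟩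
        · by_cases hv : S7.VV n t r i j K
          · exact absurd hK (claimX K hv)
          · exact Or.inl ⟨h, hv⟩
        · exact Or.inr ⟨H, hVV_of_A H h1 h2, h3⟩
      · rintro (⟨h1, h2⟩ | ⟨H, hH, rfl⟩)
        · by_contra hK
          exact h2 (hVV_of_A K h1 hK)
        · exact (hXstruct H (S7.VV_FF hH) (claimX H hH)).2.2.1
    have h𝓑 : ∀ K, K ∈ 𝓑 ↔ ((K ∈ FF n t r ∧ ¬ S7.VV n t r i j K) ∨
        ∃ H, S7.VV n t r i j H ∧ K = S7.tauS i j H) := by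
      intro K
      constructor
      · intro hK
        rcases S7.mem_shift_orig hij hsB hK with h | ⟨H, h1, h2, h3⟩
        · by_cases hv : S7.VV n t r i j K
          · exact absurd hK (claimY K hv)
          · exact Or.inl ⟨h, hv⟩
        · exact Or.inr ⟨H, hVV_of_B H h1 h2, h3⟩
      · rintro (⟨h1, h2⟩ | ⟨H, hH, rfl⟩)
        · by_contra hK
          exact h2 (hVV_of_B K h1 hK)
        · exact (hYstruct H (S7.VV_FF hH) (claimY H hH)).2.2.1
    have hAB : 𝓐 = 𝓑 := Finset.ext fun K => (h𝓐 K).trans (h𝓑 K).symm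
    -- the isomorphism via the transposition (i j)
    have hiC : i ∈ Finset.Icc 1 (t + 2 * r) := Finset.mem_Icc.2 ⟨hi, hic⟩
    have hjC : j ∉ Finset.Icc 1 (t + 2 * r) := fun h => by
      have := (Finset.mem_Icc.1 h).2; omega
    have hmain : ∀ K, K ∈ 𝓐 ↔ K.image (Equiv.swap i j) ∈ FF n t r := by
      intro K
      rw [h𝓐 K]
      by_cases hiK : i ∈ K <;> by_cases hjK : j ∈ K
      · -- both i and j in K
        rw [S7.image_swap_id (iff_of_true hiK hjK)]
        constructor
        · rintro (⟨h, _⟩ | ⟨H, hH, rfl⟩)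
          · exact h
          · exact absurd hiK (S7.mem_tau hne H).1
        · intro h
          exact Or.inl ⟨h, fun hv => hv.2.2.1 hjK⟩
      · -- i ∈ K, j ∉ K : image is tauS i j K
        rw [S7.image_swap_tau hne hiK hjK]
        have hcard : (S7.tauS i j K ∩ Finset.Icc 1 (t + 2 * r)).card =
            (K ∩ Finset.Icc 1 (t + 2 * r)).card - 1 :=
          S7.tau_inter_card hiK hiC hjC
        have h1K : 1 ≤ (K ∩ Finset.Icc 1 (t + 2 * r)).card :=
          Finset.card_pos.2 ⟨i, Finset.mem_inter.2 ⟨hiK, hiC⟩⟩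
        constructor
        · rintro (⟨hKF, hnv⟩ | ⟨H, hH, heq⟩)
          · obtain ⟨hKsub, hKc⟩ := S7.mem_FF.1 hKF
            have hcne : (K ∩ Finset.Icc 1 (t + 2 * r)).card ≠ t + r :=
              fun h => hnv ⟨hKsub, hiK, hjK, h⟩
            refine S7.mem_FF.2 ⟨S7.tau_subset hi hj1 hj hKsub, ?_⟩
            omega
          · exact absurd (heq ▸ hiK) (S7.mem_tau hne H).1
        · intro htF
          obtain ⟨hts, htc⟩ := S7.mem_FF.1 htF
          have hKsub : K ⊆ Finset.Icc 1 n := by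
            rw [← S7.tau_tau hne hiK hjK]
            exact Finset.insert_subset hiIcc ((Finset.erase_subset _ _).trans hts)
          rw [hcard] at htc
          refine Or.inl ⟨S7.mem_FF.2 ⟨hKsub, by omega⟩, fun hv => ?_⟩
          have := hv.2.2.2
          omega
      · -- i ∉ K, j ∈ K : image is insert i (K.erase j)
        rw [Equiv.swap_comm, S7.image_swap_tau (Ne.symm hne) hjK hiK]
        have hρ : S7.tauS j i K = insert i (K.erase j) := rfl
        have hjKC : j ∉ K ∩ Finset.Icc 1 (t + 2 * r) :=
          fun h => hjC (Finset.mem_inter.1 h).2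
        have hiKC : i ∉ K ∩ Finset.Icc 1 (t + 2 * r) :=
          fun h => hiK (Finset.mem_inter.1 h).1
        have hcard : (S7.tauS j i K ∩ Finset.Icc 1 (t + 2 * r)).card =
            (K ∩ Finset.Icc 1 (t + 2 * r)).card + 1 := by
          rw [hρ]
          have : insert i (K.erase j) ∩ Finset.Icc 1 (t + 2 * r) =
              insert i (K ∩ Finset.Icc 1 (t + 2 * r)) := by
            rw [S7.insert_inter_of_mem' hiC, S7.erase_inter',
              Finset.erase_eq_of_notMem hjKC]
          rw [this, Finset.card_insert_of_notMem hiKC]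
        have hiρ : i ∈ S7.tauS j i K := (S7.mem_tau (Ne.symm hne) K).2
        have hjρ : j ∉ S7.tauS j i K := (S7.mem_tau (Ne.symm hne) K).1
        constructor
        · rintro (⟨hKF, _⟩ | ⟨H, hH, heq⟩)
          · obtain ⟨hKsub, hKc⟩ := S7.mem_FF.1 hKF
            refine S7.mem_FF.2 ⟨S7.tau_subset hj1 hi
              (le_trans (le_of_lt hij) hj) hKsub, ?_⟩
            omega
          · -- K = tauS i j H with H ∈ X₀ ; then tauS j i K = H
            have hHK : H = S7.tauS j i K := by
              rw [heq]
              exact (S7.tau_tau hne hH.2.1 hH.2.2.1).symm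
            rw [← hHK]
            exact S7.VV_FF hH
        · intro htF
          obtain ⟨hts, htc⟩ := S7.mem_FF.1 htF
          have hKsub : K ⊆ Finset.Icc 1 n := by
            rw [← S7.tau_tau (Ne.symm hne) hjK hiK]
            exact Finset.insert_subset hjIcc ((Finset.erase_subset _ _).trans hts)
          rw [hcard] at htc
          rcases Nat.lt_or_ge (K ∩ Finset.Icc 1 (t + 2 * r)).card (t + r) with hlt | hge
          · -- boundary : K = tauS of a member of X₀
            refine Or.inr ⟨S7.tauS j i K, ⟨hts, hiρ, hjρ, by omega⟩, ?_⟩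
            rw [hρ]
            exact (S7.rho_tau hne hjK hiK).symm
          · exact Or.inl ⟨S7.mem_FF.2 ⟨hKsub, hge⟩, fun hv => hiK hv.2.1⟩
      · -- neither i nor j in K
        rw [S7.image_swap_id (iff_of_false hiK hjK)]
        constructor
        · rintro (⟨h, _⟩ | ⟨H, hH, rfl⟩)
          · exact h
          · exact absurd (S7.mem_tau hne H).2 hjK
        · intro h
          exact Or.inl ⟨h, fun hv => hiK hv.2.1⟩
    have hmaps : ∀ k ∈ Finset.Icc 1 n, Equiv.swap i j k ∈ Finset.Icc 1 n := by
      intro k hk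
      rcases eq_or_ne k i with rfl | hki
      · rw [Equiv.swap_apply_left]; exact hjIcc
      rcases eq_or_ne k j with rfl | hkj
      · rw [Equiv.swap_apply_right]; exact hiIcc
      · rw [Equiv.swap_apply_of_ne_of_ne hki hkj]; exact hk
    refine ⟨hAB, Equiv.swap i j, hmaps, ?_⟩
    ext K
    rw [S7.mem_image_swap_fam]
    exact hmain K
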